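/- Let h ~ N(0,1) and λ ≥ 0. Then E[shrink²(h, λ)] = (1 + λ²)·erfc(λ/√2) − √(2/π)·λ·exp(−λ²/2), where shrink(χ,λ) = χ−λ for χ>λ, 0 for |χ|≤λ, χ+λ for χ<−λ, and erfc is the complementary error function. -/

import Mathlib

open MeasureTheory ProbabilityTheory Real

noncomputable def shrink (χ l : ℝ) : ℝ :=
  if χ > l then χ - l else if χ < -l then χ + l else 0

noncomputable def erfc (x : ℝ) : ℝ :=
  (2 / Real.sqrt π) * ∫ u in Set.Ioi x, Real.exp (-u ^ 2)

open Set Filter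

lemma intOn_exp (l : ℝ) : IntegrableOn (fun x : ℝ => exp (-x^2/2)) (Ioi l) := by
  have h : (fun x : ℝ => exp (-x^2/2)) = fun x : ℝ => exp (-(2⁻¹) * x^2) := by
    funext x; congr 1; ring
  rw [h]; exact (integrable_exp_neg_mul_sq (by norm_num)).integrableOn

lemma intOn_x_exp (l : ℝ) : IntegrableOn (fun x : ℝ => x * exp (-x^2/2)) (Ioi l) := by
  have h : (fun x : ℝ => x * exp (-x^2/2)) = fun x : ℝ => x * exp (-(2⁻¹) * x^2) := by
    funext x; congr 2; ring
  rw [h]; exact (integrable_mul_exp_neg_mul_sq (by norm_num)).integrableOn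

lemma intOn_sq_exp {l : ℝ} (hl : 0 ≤ l) :
    IntegrableOn (fun x : ℝ => x^2 * exp (-x^2/2)) (Ioi l) := by
  have h := integrableOn_rpow_mul_exp_neg_mul_sq (b := 2⁻¹) (by norm_num) (s := 2) (by norm_num)
  have h2 := h.mono_set (Ioi_subset_Ioi hl)
  refine h2.congr_fun (fun x _ => ?_) measurableSet_Ioi
  beta_reduce
  rw [show ((2:ℝ)) = ((2:ℕ):ℝ) by norm_num, Real.rpow_natCast]
  congr 1; ring

lemma intOn_poly {l : ℝ} (hl : 0 ≤ l) :
    IntegrableOn (fun x : ℝ => ((x-l)^2 - (1+l^2)) * exp (-x^2/2)) (Ioi l) := by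
  have h := ((intOn_sq_exp hl).sub ((intOn_x_exp l).const_mul (2*l))).sub (intOn_exp l)
  refine h.congr (ae_of_all _ fun x => ?_)
  simp only [Pi.sub_apply]
  ring

lemma intOn_shift_sq {l : ℝ} (hl : 0 ≤ l) :
    IntegrableOn (fun x : ℝ => (x-l)^2 * exp (-x^2/2)) (Ioi l) := by
  have h := (intOn_poly hl).add ((intOn_exp l).const_mul (1+l^2))
  refine h.congr (ae_of_all _ fun x => ?_)
  simp only [Pi.add_apply]
  ring

lemma tendsto_lin_exp (c : ℝ) :
    Tendsto (fun x : ℝ => (c - x) * exp (-x^2/2)) atTop (nhds 0) := by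
  have h1 : Tendsto (fun x : ℝ => exp (-x^2/2)) atTop (nhds 0) := by
    apply Real.tendsto_exp_atBot.comp
    have h0 : Tendsto (fun x : ℝ => x^2/2) atTop atTop :=
      (tendsto_pow_atTop two_ne_zero).atTop_div_const two_pos
    have h2 : Tendsto (fun x : ℝ => -(x^2/2)) atTop atBot := tendsto_neg_atBot_iff.mpr h0
    refine h2.congr (fun x => by ring)
  have h2 : Tendsto (fun x : ℝ => x * exp (-x^2/2)) atTop (nhds 0) := by
    have h := tendsto_rpow_abs_mul_exp_neg_mul_sq_cocompact (a := 2⁻¹) (by norm_num) 1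
    have hle : (atTop : Filter ℝ) ≤ cocompact ℝ := by
      rw [cocompact_eq_atBot_atTop]; exact le_sup_right
    have h' := h.mono_left hle
    refine (h'.congr' ?_)
    filter_upwards [eventually_ge_atTop (0:ℝ)] with x hx
    rw [abs_of_nonneg hx, Real.rpow_one]
    congr 1; ring
  have := (h1.const_mul c).sub h2
  simpa [sub_mul] using this

lemma key_integral {l : ℝ} (hl : 0 ≤ l) :
    ∫ x in Ioi l, ((x-l)^2 - (1+l^2)) * exp (-x^2/2) = -(l * exp (-l^2/2)) := by
  have hderiv : ∀ x ∈ Ioi l, HasDerivAt (fun x : ℝ => (2*l - x) * exp (-x^2/2))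
      (((x-l)^2 - (1+l^2)) * exp (-x^2/2)) x := by
    intro x _
    have h1 : HasDerivAt (fun x : ℝ => -x^2/2) (-x) x := by
      have := ((hasDerivAt_pow 2 x).div_const 2).neg
      simpa [neg_div, Pi.neg_def] using this.congr_deriv (by push_cast; ring)
    have h2 := h1.exp
    have h3 : HasDerivAt (fun x : ℝ => 2*l - x) (-1) x := by
      simpa using (hasDerivAt_id x).const_sub (2*l)
    have := h3.mul h2
    refine this.congr_deriv ?_
    ring
  have hcont : ContinuousWithinAt (fun x : ℝ => (2*l - x) * exp (-x^2/2)) (Ici l) l := by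
    apply Continuous.continuousWithinAt
    fun_prop
  have := integral_Ioi_of_hasDerivAt_of_tendsto hcont hderiv (intOn_poly hl)
    (tendsto_lin_exp (2*l))
  rw [this]
  simp only [zero_sub]
  congr 1
  ring_nf

lemma subst_eq (l : ℝ) :
    ∫ x in Ioi l, exp (-x^2/2) = Real.sqrt 2 * ∫ u in Ioi (l / Real.sqrt 2), exp (-u^2) := by
  have hb : (0:ℝ) < (Real.sqrt 2)⁻¹ := inv_pos.2 (Real.sqrt_pos.2 two_pos)
  have h := integral_comp_mul_left_Ioi (fun u : ℝ => exp (-u^2)) l hb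
  have heq : ∀ x : ℝ, exp (-((Real.sqrt 2)⁻¹ * x)^2) = exp (-x^2/2) := by
    intro x
    congr 1
    rw [mul_pow, ← Real.sqrt_inv, Real.sq_sqrt (by norm_num)]
    ring
  simp only [heq] at h
  rw [h, inv_inv, smul_eq_mul, inv_mul_eq_div]

lemma main_Ioi {l : ℝ} (hl : 0 ≤ l) :
    ∫ x in Ioi l, (x-l)^2 * exp (-x^2/2)
      = (1+l^2) * (Real.sqrt 2 * ∫ u in Ioi (l / Real.sqrt 2), exp (-u^2))
        - l * exp (-l^2/2) := by
  have hsplit : (fun x : ℝ => (x-l)^2 * exp (-x^2/2))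
      = fun x : ℝ => ((x-l)^2 - (1+l^2)) * exp (-x^2/2) + (1+l^2) * exp (-x^2/2) := by
    funext x; ring
  rw [hsplit, integral_add (intOn_poly hl) ((intOn_exp l).const_mul (1+l^2)),
    key_integral hl, integral_const_mul, subst_eq]
  ring

lemma integral_gaussianReal01 (g : ℝ → ℝ) :
    ∫ x, g x ∂(gaussianReal 0 1) = ∫ x, gaussianPDFReal 0 1 x * g x := by
  rw [gaussianReal_of_var_ne_zero 0 one_ne_zero]
  have h : gaussianPDF 0 1 = fun x => ((gaussianPDFReal 0 1 x).toNNReal : ENNReal) := rfl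
  rw [h, integral_withDensity_eq_integral_smul
    ((measurable_gaussianPDFReal 0 1).real_toNNReal) g]
  congr 1; funext x
  rw [NNReal.smul_def, smul_eq_mul, Real.coe_toNNReal _ (gaussianPDFReal_nonneg 0 1 x)]

lemma shrink_sq_eq {l : ℝ} (hl : 0 ≤ l) (x : ℝ) :
    shrink x l ^ 2 = max (|x| - l) 0 ^ 2 := by
  unfold shrink
  split_ifs with h1 h2
  · rw [abs_of_nonneg (hl.trans h1.le), max_eq_left (sub_nonneg.2 h1.le)]
  · have hx : x < 0 := lt_of_lt_of_le h2 (neg_nonpos.2 hl)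
    rw [abs_of_neg hx, max_eq_left (by linarith)]
    ring
  · have hx : |x| ≤ l := abs_le.2 ⟨not_lt.1 h2, not_lt.1 h1⟩
    rw [max_eq_right (by linarith)]

lemma final_algebra (l J E : ℝ) :
    (Real.sqrt (2*π))⁻¹ * (2 * ((1+l^2) * (Real.sqrt 2 * J) - l * E)) =
      (1 + l^2) * ((2 / Real.sqrt π) * J) - Real.sqrt (2/π) * l * E := by
  have h2 : Real.sqrt (2*π) = Real.sqrt 2 * Real.sqrt π := Real.sqrt_mul (by norm_num) π
  have h3 : Real.sqrt (2/π) = Real.sqrt 2 / Real.sqrt π := Real.sqrt_div' 2 pi_nonneg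
  have ha : Real.sqrt 2 * Real.sqrt 2 = 2 := Real.mul_self_sqrt (by norm_num)
  have hπ : (0:ℝ) < Real.sqrt π := Real.sqrt_pos.2 Real.pi_pos
  have h2p : (0:ℝ) < Real.sqrt 2 := Real.sqrt_pos.2 two_pos
  rw [h2, h3]
  field_simp
  linear_combination (l * E) * ha

theorem expected_shrink_sq (l : ℝ) (hl : 0 ≤ l) :
    ∫ x, shrink x l ^ 2 ∂(gaussianReal 0 1) =
      (1 + l ^ 2) * erfc (l / Real.sqrt 2) - Real.sqrt (2 / π) * l * exp (-l ^ 2 / 2) := by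
  rw [integral_gaussianReal01]
  have hpdf : ∀ x : ℝ, gaussianPDFReal 0 1 x * shrink x l ^ 2
      = (Real.sqrt (2*π))⁻¹ * (max (|x| - l) 0 ^ 2 * exp (-|x|^2/2)) := by
    intro x
    simp only [gaussianPDFReal]
    rw [shrink_sq_eq hl x]
    have h' : exp (-|x|^2/2) = exp (-x^2/2) := by rw [sq_abs]
    push_cast
    rw [h']
    ring_nf
  simp only [hpdf]
  have habs := integral_comp_abs
    (f := fun t : ℝ => (Real.sqrt (2*π))⁻¹ * (max (t - l) 0 ^ 2 * exp (-t^2/2)))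
  rw [habs]
  have hIoc : IntegrableOn
      (fun t : ℝ => (Real.sqrt (2*π))⁻¹ * (max (t - l) 0 ^ 2 * exp (-t^2/2))) (Ioc 0 l) := by
    refine (integrableOn_zero).congr_fun (fun x hx => ?_) measurableSet_Ioc
    rw [max_eq_right (by simp [sub_nonpos.2 hx.2])]
    simp
  have hIoi : IntegrableOn
      (fun t : ℝ => (Real.sqrt (2*π))⁻¹ * (max (t - l) 0 ^ 2 * exp (-t^2/2))) (Ioi l) := by
    have base : IntegrableOn
        (fun x : ℝ => (Real.sqrt (2*π))⁻¹ * ((x - l) ^ 2 * exp (-x^2/2))) (Ioi l) :=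
      (intOn_shift_sq hl).const_mul ((Real.sqrt (2*π))⁻¹)
    refine base.congr_fun (fun x hx => ?_) measurableSet_Ioi
    rw [max_eq_left (sub_nonneg.2 (le_of_lt hx))]
  have hsplit : ∫ x in Ioi (0:ℝ),
        (Real.sqrt (2*π))⁻¹ * (max (x - l) 0 ^ 2 * exp (-x^2/2))
      = ∫ x in Ioi l, (Real.sqrt (2*π))⁻¹ * (max (x - l) 0 ^ 2 * exp (-x^2/2)) := by
    rw [← Ioc_union_Ioi_eq_Ioi hl,
      setIntegral_union (Ioc_disjoint_Ioi le_rfl) measurableSet_Ioi hIoc hIoi]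
    have : ∫ x in Ioc (0:ℝ) l, (Real.sqrt (2*π))⁻¹ * (max (x - l) 0 ^ 2 * exp (-x^2/2)) = 0 := by
      rw [setIntegral_congr_fun measurableSet_Ioc
        (g := fun _ => (0:ℝ)) (fun x hx => by
          rw [max_eq_right (by simp [sub_nonpos.2 hx.2])]; simp)]
      simp
    rw [this, zero_add]
  rw [hsplit]
  have hIoi_eq : ∫ x in Ioi l, (Real.sqrt (2*π))⁻¹ * (max (x - l) 0 ^ 2 * exp (-x^2/2))
      = (Real.sqrt (2*π))⁻¹ * ∫ x in Ioi l, (x - l)^2 * exp (-x^2/2) := by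
    rw [← integral_const_mul]
    refine setIntegral_congr_fun measurableSet_Ioi (fun x hx => ?_)
    rw [max_eq_left (sub_nonneg.2 (le_of_lt hx))]
  rw [hIoi_eq, main_Ioi hl, erfc]
  have := final_algebra l (∫ u in Ioi (l / Real.sqrt 2), exp (-u^2)) (exp (-l^2/2))
  calc 2 * ((Real.sqrt (2*π))⁻¹ *
        ((1+l^2) * (Real.sqrt 2 * ∫ u in Ioi (l / Real.sqrt 2), exp (-u^2))
          - l * exp (-l^2/2)))
      = (Real.sqrt (2*π))⁻¹ * (2 * ((1+l^2) * (Real.sqrt 2 * ∫ u in Ioi (l / Real.sqrt 2), exp (-u^2)) - l * exp (-l^2/2))) := by ring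
    _ = (1 + l^2) * ((2 / Real.sqrt π) * ∫ u in Ioi (l / Real.sqrt 2), exp (-u^2)) - Real.sqrt (2/π) * l * exp (-l^2/2) := this
    _ = (1 + l ^ 2) * ((2 / Real.sqrt π) * ∫ u in Set.Ioi (l / Real.sqrt 2), Real.exp (-u ^ 2)) - Real.sqrt (2 / π) * l * exp (-l ^ 2 / 2) := by norm_num
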